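/- arXiv:2106.13826 — 2 statements merged into one kernel-verified Lean document; each statement's English description precedes it below -/
import Mathlib

section
/- In the category Graph^(L,≤) of labeled graphs over a complete lattice (L,≤), monomorphisms are stable under pushout: for every span B ←^b A →^c C in which c is a monomorphism, there exists a pushout B →^m D ←^n C of the span, and m is a monomorphism. -/
open CategoryTheory
open Classical

noncomputable section

/-- Labeled graphs over a label type `W`. -/
structure LGraph (W : Type) : Type 1 where
  V : Type
  E : Type
  src : E → V
  tgt : E → V
  lV : V → W
  lE : E → W

section Cat

variable {W : Type} [Preorder W]

/-- Label-nondecreasing graph premorphisms: the morphisms of the category `Graph^(L,≤)`. -/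
structure GLHom (G H : LGraph W) : Type where
  onV : G.V → H.V
  onE : G.E → H.E
  src_comm : ∀ e, H.src (onE e) = onV (G.src e)
  tgt_comm : ∀ e, H.tgt (onE e) = onV (G.tgt e)
  lV_le : ∀ v, G.lV v ≤ H.lV (onV v)
  lE_le : ∀ e, G.lE e ≤ H.lE (onE e)

theorem GLHom.ext' {G H : LGraph W} {f g : GLHom G H}
    (h1 : f.onV = g.onV) (h2 : f.onE = g.onE) : f = g := by
  cases f; cases g
  cases h1; cases h2
  rfl

/-- The category `Graph^(L,≤)` of labeled graphs over a preordered label set. -/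
instance : Category (LGraph W) where
  Hom G H := GLHom G H
  id G := { onV := id, onE := id, src_comm := fun _ => rfl, tgt_comm := fun _ => rfl,
            lV_le := fun _ => le_refl _, lE_le := fun _ => le_refl _ }
  comp f g :=
    { onV := g.onV ∘ f.onV
      onE := g.onE ∘ f.onE
      src_comm := fun e => by
        simp only [Function.comp_apply, g.src_comm, f.src_comm]
      tgt_comm := fun e => by
        simp only [Function.comp_apply, g.tgt_comm, f.tgt_comm]
      lV_le := fun v => le_trans (f.lV_le v) (g.lV_le _)
      lE_le := fun e => le_trans (f.lE_le e) (g.lE_le _) }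
  id_comp f := GLHom.ext' rfl rfl
  comp_id f := GLHom.ext' rfl rfl
  assoc f g h := GLHom.ext' rfl rfl

/-- Vertex map of a morphism. -/
abbrev homV {G H : LGraph W} (f : G ⟶ H) : G.V → H.V := GLHom.onV f

/-- Edge map of a morphism. -/
abbrev homE {G H : LGraph W} (f : G ⟶ H) : G.E → H.E := GLHom.onE f

end Cat

/-- A graph is finite if it has finitely many vertices and edges. -/
def FiniteG {W : Type} (G : LGraph W) : Prop := Finite G.V ∧ Finite G.E
/-- The flat lattice on a base label set `A`: a global minimum `⊥`, a global
maximum `⊤`, and all elements of `A` pairwise incomparable. -/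
inductive Flat (A : Type) : Type
  | bot : Flat A
  | el : A → Flat A
  | top : Flat A

namespace Flat

def le {A : Type} : Flat A → Flat A → Prop
  | bot, _ => True
  | _, top => True
  | el a, el b => a = b
  | _, _ => False

instance (A : Type) : Preorder (Flat A) where
  le := Flat.le
  le_refl a := by cases a <;> trivial
  le_trans a b c hab hbc := by
    cases a <;> cases b <;> cases c <;> simp_all [Flat.le]

theorem bot_le {A : Type} (a : Flat A) : (Flat.bot : Flat A) ≤ a := by
  show Flat.le Flat.bot a
  cases a <;> trivial

theorem le_top {A : Type} (a : Flat A) : a ≤ (Flat.top : Flat A) := by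
  show Flat.le a Flat.top
  cases a <;> trivial

theorem le_cases {A : Type} {a b : Flat A} (h : a = Flat.bot ∨ b = Flat.top) : a ≤ b := by
  rcases h with h | h
  · subst h; exact bot_le _
  · subst h; exact le_top _

end Flat

/-- The flat lattice `Σ°` induced by a signature `S` together with the
positive natural numbers (used as edge labels). -/
abbrev FlatL (S : Type) := Flat (S ⊕ ℕ+)
/-- First-order terms over a signature `S` with arity function `ar` and
variable set `X`. -/
inductive Term (S : Type) (ar : S → ℕ) (X : Type) : Type
  | var : X → Term S ar X
  | app : (f : S) → (Fin (ar f) → Term S ar X) → Term S ar X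

namespace Term

variable {S : Type} {ar : S → ℕ} {X : Type}

/-- The subterm of `t` at a position (a list of (0-based) child indices),
if the position exists in `t`. -/
def sub? : Term S ar X → List ℕ → Option (Term S ar X)
  | t, [] => some t
  | .var _, _ :: _ => none
  | .app f ts, i :: p => if h : i < ar f then sub? (ts ⟨i, h⟩) p else none

/-- The set of variables occurring in a term. -/
def vars (t : Term S ar X) : Set X := {x | ∃ p, t.sub? p = some (.var x)}

/-- A term is linear if every variable occurs at most once in it. -/
def Linear (t : Term S ar X) : Prop :=
  ∀ x p q, t.sub? p = some (.var x) → t.sub? q = some (.var x) → p = q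

/-- The head symbol of a term, if any. -/
def head? : Term S ar X → Option S
  | .var _ => none
  | .app f _ => some f

/-- The function symbol at position `p` of `t`, if any. -/
def symAt (t : Term S ar X) (p : List ℕ) : Option S := (t.sub? p).bind head?

theorem sub?_append (t : Term S ar X) (p q : List ℕ) :
    t.sub? (p ++ q) = (t.sub? p).bind (fun s => s.sub? q) := by
  induction p generalizing t with
  | nil => simp [sub?]
  | cons i p ih =>
    cases t with
    | var x => simp [sub?]
    | app f ts =>
      show sub? (.app f ts) (i :: (p ++ q)) = _
      simp only [sub?]
      by_cases h : i < ar f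
      · simp [h, ih]
      · simp [h]

theorem symAt_sub (t : Term S ar X) {p : List ℕ} {f : S} (h : t.symAt p = some f) :
    ∃ ts : Fin (ar f) → Term S ar X, t.sub? p = some (.app f ts) := by
  unfold symAt at h
  cases hs : t.sub? p with
  | none => rw [hs] at h; simp at h
  | some s =>
    rw [hs] at h
    cases s with
    | var x => simp [head?] at h
    | app g ts =>
      simp [head?] at h
      subst h
      exact ⟨ts, rfl⟩

theorem edge_sub?_isSome (t : Term S ar X) {p : List ℕ} {i : ℕ}
    (h : ∃ f, t.symAt p = some f ∧ i < ar f) :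
    ∃ s, t.sub? (p ++ [i]) = some s := by
  obtain ⟨f, hf, hi⟩ := h
  obtain ⟨ts, hts⟩ := t.symAt_sub hf
  refine ⟨ts ⟨i, hi⟩, ?_⟩
  rw [sub?_append, hts]
  simp [sub?, hi]

theorem edge_tgt_var (t : Term S ar X) {p : List ℕ} {i : ℕ}
    (h : ∃ f, t.symAt p = some f ∧ i < ar f)
    (hn : ¬ (t.symAt (p ++ [i])).isSome) :
    ∃ x, t.sub? (p ++ [i]) = some (.var x) := by
  obtain ⟨s, hs⟩ := t.edge_sub?_isSome h
  cases s with
  | var x => exact ⟨x, hs⟩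
  | app g ts => exact absurd (by simp [symAt, hs, head?]) hn

theorem root_var (t : Term S ar X) (h : ¬ (t.symAt []).isSome) :
    ∃ x, t.sub? [] = some (.var x) := by
  cases t with
  | var x => exact ⟨x, rfl⟩
  | app f ts => exact absurd (by simp [symAt, sub?, head?]) h

/-- Vertices of the term encoding: symbol vertices (named by their position)
and variable heads (named by their variable). -/
def encV (t : Term S ar X) : Type :=
  {p : List ℕ // (t.symAt p).isSome} ⊕ {x : X // x ∈ t.vars}

/-- Edges of the term encoding: pairs of a symbol position and a child index. -/
def encE (t : Term S ar X) : Type :=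
  {pi : List ℕ × ℕ // ∃ f, t.symAt pi.1 = some f ∧ pi.2 < ar f}

/-- Target of an edge of the term encoding. -/
noncomputable def encTgt (t : Term S ar X) (e : t.encE) : t.encV :=
  if h : (t.symAt (e.1.1 ++ [e.1.2])).isSome then Sum.inl ⟨e.1.1 ++ [e.1.2], h⟩
  else Sum.inr ⟨Classical.choose (t.edge_tgt_var e.2 h),
    ⟨e.1.1 ++ [e.1.2], Classical.choose_spec (t.edge_tgt_var e.2 h)⟩⟩

/-- The term encoding `t°` of a term `t` as a `Σ°`-labeled graph. -/
noncomputable def enc (t : Term S ar X) : LGraph (FlatL S) where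
  V := t.encV
  E := t.encE
  src e := Sum.inl ⟨e.1.1, by obtain ⟨f, hf, _⟩ := e.2; simp [hf]⟩
  tgt := t.encTgt
  lV v := match v with
    | .inl q => (t.symAt q.1).elim Flat.bot (fun f => Flat.el (Sum.inl f))
    | .inr _ => Flat.bot
  lE e := Flat.el (Sum.inr ⟨e.1.2 + 1, Nat.succ_pos _⟩)

/-- The root of the term encoding (the vertex at position `ε`). -/
noncomputable def encRoot (t : Term S ar X) : t.encV :=
  if h : (t.symAt []).isSome then Sum.inl ⟨[], h⟩
  else Sum.inr ⟨Classical.choose (t.root_var h), ⟨[], Classical.choose_spec (t.root_var h)⟩⟩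

/-- `t.encVertAt p v` says that `v` is the vertex at position `p` in the term
encoding `t°`. -/
def encVertAt (t : Term S ar X) (p : List ℕ) : t.encV → Prop
  | .inl q => q.1 = p
  | .inr x => t.sub? p = some (.var x.1)

/-- The set of variable heads of a term encoding. -/
def varHeads (t : Term S ar X) : Set t.encV := Set.range Sum.inr

/-- Applying a substitution to a term. -/
def subst (σ : X → Term S ar X) : Term S ar X → Term S ar X
  | .var x => σ x
  | .app f ts => .app f (fun i => subst σ (ts i))

end Term

/-- One-hole contexts over a signature. `app f i ts C` is the context
`f(ts 0, …, C, …, ts (n-1))` with `C` at argument position `i`. -/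
inductive Ctx (S : Type) (ar : S → ℕ) (X : Type) : Type
  | hole : Ctx S ar X
  | app : (f : S) → (i : Fin (ar f)) → (Fin (ar f) → Term S ar X) → Ctx S ar X → Ctx S ar X

namespace Ctx

variable {S : Type} {ar : S → ℕ} {X : Type}

/-- Replacing the hole of a context by a term. -/
def fill : Ctx S ar X → Term S ar X → Term S ar X
  | .hole, t => t
  | .app f i ts C, t => .app f (Function.update ts i (C.fill t))

/-- The position of the hole of a context. -/
def holePos : Ctx S ar X → List ℕ
  | .hole => []
  | .app _ i _ C => (i : ℕ) :: C.holePos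

end Ctx

/-- A term rewrite rule `lhs → rhs`: `lhs` is not a variable and all variables
of `rhs` occur in `lhs`. -/
structure TRSRule (S : Type) (ar : S → ℕ) (X : Type) : Type where
  lhs : Term S ar X
  rhs : Term S ar X
  lhs_not_var : ∀ x, lhs ≠ Term.var x
  var_cond : rhs.vars ⊆ lhs.vars

namespace TRSRule

variable {S : Type} {ar : S → ℕ} {X : Type}

/-- A rule is linear if both sides are linear terms. -/
def Linear (ρ : TRSRule S ar X) : Prop := ρ.lhs.Linear ∧ ρ.rhs.Linear

/-- The rewrite step relation generated by a single rule. -/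
def Step (ρ : TRSRule S ar X) (s t : Term S ar X) : Prop :=
  ∃ (C : Ctx S ar X) (σ : X → Term S ar X),
    s = C.fill (ρ.lhs.subst σ) ∧ t = C.fill (ρ.rhs.subst σ)

/-- The rewrite step relation of a rule at a fixed position `p`. -/
def StepAt (ρ : TRSRule S ar X) (p : List ℕ) (s t : Term S ar X) : Prop :=
  ∃ (C : Ctx S ar X) (σ : X → Term S ar X),
    C.holePos = p ∧ s = C.fill (ρ.lhs.subst σ) ∧ t = C.fill (ρ.rhs.subst σ)

end TRSRule

/-- The rewrite relation of a term rewriting system. -/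
def TStep {S : Type} {ar : S → ℕ} {X : Type} (Rs : Set (TRSRule S ar X))
    (s t : Term S ar X) : Prop :=
  ∃ ρ ∈ Rs, ρ.Step s t
section Closures

variable {A : Type}

/-- Upper context closure `C[G]` of a graph rooted at `r`: adds a `⊤`-labeled
context vertex with a `⊤`-labeled edge to the root and a `⊤`-labeled loop. -/
def upperCC (G : LGraph (Flat A)) (r : G.V) : LGraph (Flat A) where
  V := G.V ⊕ Unit
  E := G.E ⊕ Bool
  src e := match e with
    | .inl e => .inl (G.src e)
    | .inr _ => .inr ()
  tgt e := match e with
    | .inl e => .inl (G.tgt e)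
    | .inr true => .inl r
    | .inr false => .inr ()
  lV v := match v with
    | .inl v => G.lV v
    | .inr _ => Flat.top
  lE e := match e with
    | .inl e => G.lE e
    | .inr _ => Flat.top

/-- Lower context closure `G↓_Xs`: relabels every vertex in `Xs` to `⊤` and
adds for it a fresh `⊤`-labeled vertex `x'` with a `⊤`-labeled edge `x → x'`
and a `⊤`-labeled loop on `x'`. -/
noncomputable def lowerCC (G : LGraph (Flat A)) (Xs : Set G.V) : LGraph (Flat A) where
  V := G.V ⊕ Xs
  E := G.E ⊕ (Xs ⊕ Xs)
  src e := match e with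
    | .inl e => .inl (G.src e)
    | .inr (.inl x) => .inl x.1
    | .inr (.inr x) => .inr x
  tgt e := match e with
    | .inl e => .inl (G.tgt e)
    | .inr (.inl x) => .inr x
    | .inr (.inr x) => .inr x
  lV v := match v with
    | .inl v => if v ∈ Xs then Flat.top else G.lV v
    | .inr _ => Flat.top
  lE e := match e with
    | .inl e => G.lE e
    | .inr _ => Flat.top

/-- The context closure `C[G↓_Xs]` of a rooted graph. -/
noncomputable def ctxCC (G : LGraph (Flat A)) (r : G.V) (Xs : Set G.V) : LGraph (Flat A) :=
  upperCC (lowerCC G Xs) (Sum.inl r)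

theorem ctxCC_lV_inl (G : LGraph (Flat A)) (r : G.V) (Xs : Set G.V) (v : G.V) :
    (ctxCC G r Xs).lV (Sum.inl (Sum.inl v)) = if v ∈ Xs then Flat.top else G.lV v := rfl

/-- The typing morphism `G ↣ C[G↓_Xs]` (an inclusion). -/
noncomputable def tCC (G : LGraph (Flat A)) (r : G.V) (Xs : Set G.V) :
    GLHom G (ctxCC G r Xs) where
  onV v := Sum.inl (Sum.inl v)
  onE e := Sum.inl (Sum.inl e)
  src_comm e := rfl
  tgt_comm e := rfl
  lV_le v := by
    rw [ctxCC_lV_inl]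
    split
    · exact Flat.le_top _
    · exact le_refl _
  lE_le e := le_refl _

end Closures

/-- The interface graph `I(t)` of a term `t`: a discrete graph with
`⊥`-labeled vertices `Var(t) ∪ {ε}`. -/
def interfaceG {S : Type} {ar : S → ℕ} {X : Type} (t : Term S ar X) : LGraph (FlatL S) where
  V := {x : X // x ∈ t.vars} ⊕ Unit
  E := Empty
  src e := e.elim
  tgt e := e.elim
  lV _ := Flat.bot
  lE e := e.elim

/-- The variable vertices of an interface graph. -/
def interfaceVars {S : Type} {ar : S → ℕ} {X : Type} (t : Term S ar X) :
    Set (interfaceG t).V := Set.range Sum.inl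
/-- A PBPO⁺ rewrite rule. -/
structure PBPORule (W : Type) [Preorder W] : Type 1 where
  L : LGraph W
  K : LGraph W
  R : LGraph W
  L' : LGraph W
  K' : LGraph W
  l : K ⟶ L
  r : K ⟶ R
  l' : K' ⟶ L'
  tL : L ⟶ L'
  tK : K ⟶ K'

/-- A PBPO⁺ rewrite step `G_L ⇒_ρ^α G_R`, consisting of a monic match `m`, an
adherence morphism `α` making the match square a pullback, the pullback `G_K`
of `α` along `l'`, and the pushout `G_R` of `r` along `u`. -/
structure RewriteStep {W : Type} [Preorder W] (ρ : PBPORule W) (G₀ G₁ : LGraph W) :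
    Type 1 where
  m : ρ.L ⟶ G₀
  mono_m : Mono m
  α : G₀ ⟶ ρ.L'
  matchPB : IsPullback (𝟙 ρ.L) m ρ.tL α
  GK : LGraph W
  gL : GK ⟶ G₀
  u' : GK ⟶ ρ.K'
  pbK : IsPullback gL u' α ρ.l'
  u : ρ.K ⟶ GK
  u_u' : u ≫ u' = ρ.tK
  u_gL : u ≫ gL = ρ.l ≫ m
  w : ρ.R ⟶ G₁
  gR : GK ⟶ G₁
  po : IsPushout ρ.r u w gR

/-- `G ⇒_ρ H` : there exists a PBPO⁺ rewrite step from `G` to `H` via `ρ`. -/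
def PBPOStep {W : Type} [Preorder W] (ρ : PBPORule W) (G H : LGraph W) : Prop :=
  Nonempty (RewriteStep ρ G H)

/-- A match `m` establishes a match (of the rule `ρ`) if it is monic and some
adherence morphism makes the match square a pullback. -/
def EstablishesMatch {W : Type} [Preorder W] (ρ : PBPORule W) {G : LGraph W}
    (m : ρ.L ⟶ G) : Prop :=
  Mono m ∧ ∃ α : G ⟶ ρ.L', m ≫ α = ρ.tL ∧ IsPullback (𝟙 ρ.L) m ρ.tL α

section RuleEnc

variable {S : Type} {ar : S → ℕ} {X : Type}

/-- The morphism `l : K → L` of the rule encoding. -/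
noncomputable def encKtoL (ρ : TRSRule S ar X) : GLHom (interfaceG ρ.rhs) ρ.lhs.enc where
  onV v := match v with
    | .inl x => Sum.inr ⟨x.1, ρ.var_cond x.2⟩
    | .inr _ => ρ.lhs.encRoot
  onE e := e.elim
  src_comm e := e.elim
  tgt_comm e := e.elim
  lV_le v := by cases v <;> exact Flat.bot_le _
  lE_le e := e.elim

/-- The morphism `r : K → R` of the rule encoding. -/
noncomputable def encKtoR (ρ : TRSRule S ar X) : GLHom (interfaceG ρ.rhs) ρ.rhs.enc where
  onV v := match v with
    | .inl x => Sum.inr x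
    | .inr _ => ρ.rhs.encRoot
  onE e := e.elim
  src_comm e := e.elim
  tgt_comm e := e.elim
  lV_le v := by cases v <;> exact Flat.bot_le _
  lE_le e := e.elim

/-- Mapping the primed (lower-closure) vertices of `K'` to those of `L'`. -/
noncomputable def mapPrime (ρ : TRSRule S ar X) :
    ↥(interfaceVars ρ.rhs) → ↥(ρ.lhs.varHeads) :=
  fun x' => match x' with
  | ⟨.inl x, _⟩ => ⟨Sum.inr ⟨x.1, ρ.var_cond x.2⟩, ⟨⟨x.1, ρ.var_cond x.2⟩, rfl⟩⟩
  | ⟨.inr u, h⟩ => absurd h (by rintro ⟨y, hy⟩; cases hy)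

/-- The morphism `l' : K' → L'` of the rule encoding. -/
noncomputable def encl' (ρ : TRSRule S ar X) :
    GLHom (ctxCC (interfaceG ρ.rhs) (Sum.inr ()) (interfaceVars ρ.rhs))
      (ctxCC ρ.lhs.enc ρ.lhs.encRoot ρ.lhs.varHeads) where
  onV v := match v with
    | .inl (.inl (.inl x)) => .inl (.inl (Sum.inr ⟨x.1, ρ.var_cond x.2⟩))
    | .inl (.inl (.inr _)) => .inl (.inl ρ.lhs.encRoot)
    | .inl (.inr x') => .inl (.inr (mapPrime ρ x'))
    | .inr u => .inr u
  onE e := match e with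
    | .inl (.inl e) => e.elim
    | .inl (.inr (.inl x')) => .inl (.inr (.inl (mapPrime ρ x')))
    | .inl (.inr (.inr x')) => .inl (.inr (.inr (mapPrime ρ x')))
    | .inr b => .inr b
  src_comm := by
    rintro ((e | (⟨(x | u), hv⟩ | ⟨(x | u), hv⟩)) | b)
    · exact e.elim
    · rfl
    · exact absurd hv (by rintro ⟨y, hy⟩; cases hy)
    · rfl
    · exact absurd hv (by rintro ⟨y, hy⟩; cases hy)
    · rfl
  tgt_comm := by
    rintro ((e | (x' | x')) | b)
    · exact e.elim
    · rfl
    · rfl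
    · cases b <;> rfl
  lV_le := by
    rintro (((x | u) | x') | c)
    · refine Flat.le_cases (Or.inr ?_)
      refine (ctxCC_lV_inl _ _ _ _).trans ?_
      rw [if_pos ⟨⟨x.1, ρ.var_cond x.2⟩, rfl⟩]
    · refine Flat.le_cases (Or.inl ?_)
      refine (ctxCC_lV_inl _ _ _ _).trans ?_
      rw [if_neg (by rintro ⟨y, hy⟩; cases hy)]
      rfl
    · exact Flat.le_cases (Or.inr rfl)
    · exact Flat.le_cases (Or.inr rfl)
  lE_le := by
    rintro ((e | (x' | x')) | b)
    · exact e.elim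
    · exact Flat.le_cases (Or.inr rfl)
    · exact Flat.le_cases (Or.inr rfl)
    · exact Flat.le_cases (Or.inr rfl)

/-- The rule encoding `ρ°` of a term rewrite rule `ρ : l → r` as a PBPO⁺ rule. -/
noncomputable def ruleEnc (ρ : TRSRule S ar X) : PBPORule (FlatL S) where
  L := ρ.lhs.enc
  K := interfaceG ρ.rhs
  R := ρ.rhs.enc
  L' := ctxCC ρ.lhs.enc ρ.lhs.encRoot ρ.lhs.varHeads
  K' := ctxCC (interfaceG ρ.rhs) (Sum.inr ()) (interfaceVars ρ.rhs)
  l := encKtoL ρ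
  r := encKtoR ρ
  l' := encl' ρ
  tL := tCC ρ.lhs.enc ρ.lhs.encRoot ρ.lhs.varHeads
  tK := tCC (interfaceG ρ.rhs) (Sum.inr ()) (interfaceVars ρ.rhs)

/-- The rewrite relation of an encoded term rewriting system `R°`. -/
def SysStep (Rs : Set (TRSRule S ar X)) (G H : LGraph (FlatL S)) : Prop :=
  ∃ ρ ∈ Rs, PBPOStep (ruleEnc ρ) G H

end RuleEnc
section Cycles

variable {W : Type}

/-- `IsUPath G u es v`: `es` is an undirected path from `u` to `v` in `G`. -/
def IsUPath (G : LGraph W) : G.V → List G.E → G.V → Prop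
  | u, [], v => u = v
  | u, e :: es, v =>
      (G.src e = u ∧ IsUPath G (G.tgt e) es v) ∨ (G.tgt e = u ∧ IsUPath G (G.src e) es v)

/-- An undirected cycle at `v`: a nonempty undirected path from `v` to `v`
with pairwise distinct edges. -/
def IsUCycle (G : LGraph W) (v : G.V) (es : List G.E) : Prop :=
  es ≠ [] ∧ es.Nodup ∧ IsUPath G v es v

/-- A cycle edge is an edge lying on some undirected cycle. -/
def CycleEdge (G : LGraph W) (e : G.E) : Prop :=
  ∃ v es, IsUCycle G v es ∧ e ∈ es

/-- A graph is cycle-free if it contains no undirected cycle. -/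
def CycleFree (G : LGraph W) : Prop := ¬ ∃ v es, IsUCycle G v es

/-- `[G]`: the graph obtained from `G` by deleting all cycle edges. -/
def dropCycles (G : LGraph W) : LGraph W where
  V := G.V
  E := {e : G.E // ¬ CycleEdge G e}
  src e := G.src e.1
  tgt e := G.tgt e.1
  lV := G.lV
  lE e := G.lE e.1

end Cycles

section Zones

variable {S : Type}

/-- A vertex is in-well-formed if it has at most one incoming edge. -/
def InWF (G : LGraph (FlatL S)) (v : G.V) : Prop :=
  ∀ e e' : G.E, G.tgt e = v → G.tgt e' = v → e = e'

/-- A vertex is out-well-formed if its label is a function symbol `f` and it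
has exactly `ar f` outgoing edges, labeled `1, …, ar f`. -/
def OutWF (G : LGraph (FlatL S)) (ar : S → ℕ) (v : G.V) : Prop :=
  ∃ f : S, G.lV v = Flat.el (Sum.inl f) ∧
    ∃ φ : Fin (ar f) ≃ {e : G.E // G.src e = v},
      ∀ i, G.lE (φ i).1 = Flat.el (Sum.inr ⟨(i : ℕ) + 1, Nat.succ_pos _⟩)

/-- A vertex is good if it is out-well-formed and all its children are
in-well-formed; otherwise it is bad. -/
def Good (G : LGraph (FlatL S)) (ar : S → ℕ) (v : G.V) : Prop :=
  OutWF G ar v ∧ ∀ e : G.E, G.src e = v → InWF G (G.tgt e)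

/-- The edges included in a zone by the zoning algorithm are exactly the edges
with a good source. -/
def ZoneEdge (G : LGraph (FlatL S)) (ar : S → ℕ) (e : G.E) : Prop :=
  Good G ar (G.src e)

/-- One directed step along an edge included in a zone. -/
def ZStep (G : LGraph (FlatL S)) (ar : S → ℕ) (u v : G.V) : Prop :=
  ∃ e, ZoneEdge G ar e ∧ G.src e = u ∧ G.tgt e = v

/-- Two vertices lie in the same zone iff they are connected by edges included
in zones (equivalence closure of `ZStep`). -/
def SameZone (G : LGraph (FlatL S)) (ar : S → ℕ) : G.V → G.V → Prop :=
  Relation.EqvGen (ZStep G ar)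

/-- A root of a zone: a vertex with no parent inside its zone. -/
def IsZoneRoot (G : LGraph (FlatL S)) (ar : S → ℕ) (r : G.V) : Prop :=
  ¬ ∃ e, ZoneEdge G ar e ∧ G.tgt e = r

/-- A directed path along zone edges. -/
def IsZPath (G : LGraph (FlatL S)) (ar : S → ℕ) : G.V → List G.E → G.V → Prop
  | u, [], v => u = v
  | u, e :: es, v => ZoneEdge G ar e ∧ G.src e = u ∧ IsZPath G ar (G.tgt e) es v

/-- The zone of `v₀`, as a subgraph of `G`, with every bad vertex relabeled
with `⊥`. -/
noncomputable def zoneTermGraph (G : LGraph (FlatL S)) (ar : S → ℕ) (v₀ : G.V) :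
    LGraph (FlatL S) where
  V := {u : G.V // SameZone G ar u v₀}
  E := {e : G.E // ZoneEdge G ar e ∧ SameZone G ar (G.src e) v₀}
  src e := ⟨G.src e.1, e.2.2⟩
  tgt e := ⟨G.tgt e.1,
    Relation.EqvGen.trans _ _ _
      (Relation.EqvGen.symm _ _ (Relation.EqvGen.rel _ _ ⟨e.1, e.2.1, rfl, rfl⟩)) e.2.2⟩
  lV u := if Good G ar u.1 then G.lV u.1 else Flat.bot
  lE e := G.lE e.1

end Zones

section Relabel

variable {W : Type}

/-- `G` with the label of vertex `v` changed to `l`. -/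
noncomputable def relabelV (G : LGraph W) (v : G.V) (l : W) : LGraph W :=
  { G with lV := Function.update G.lV v l }

/-- `G` with the label of every vertex in `s` changed to `l`. -/
noncomputable def relabelSet (G : LGraph W) (s : Set G.V) (l : W) : LGraph W :=
  { G with lV := fun u => if u ∈ s then l else G.lV u }

end Relabel

section PushoutConstruction

namespace POaux

variable {α β γ : Type} (f : α → β) (g : α → γ)

/-- The generating relation of the pushout quotient. -/
def pr : β ⊕ γ → β ⊕ γ → Prop := fun x y => ∃ a, x = Sum.inl (f a) ∧ y = Sum.inr (g a)

/-- An explicit description of the equivalence closure of `pr` when `g` is injective. -/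
def pe : β ⊕ γ → β ⊕ γ → Prop
  | .inl u, .inl v => u = v
  | .inl u, .inr z => ∃ a, f a = u ∧ g a = z
  | .inr z, .inl u => ∃ a, f a = u ∧ g a = z
  | .inr z, .inr w => z = w ∨ ∃ a a', g a = z ∧ g a' = w ∧ f a = f a'

theorem pe_of_eqvGen (hg : Function.Injective g) :
    ∀ {x y}, Relation.EqvGen (pr f g) x y → pe f g x y := by
  intro x y h
  induction h with
  | rel x y h => obtain ⟨a, rfl, rfl⟩ := h; exact ⟨a, rfl, rfl⟩
  | refl x =>
    cases x with
    | inl u => exact rfl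
    | inr z => exact Or.inl rfl
  | symm x y h ih =>
    cases x <;> cases y <;> simp only [pe] at ih ⊢
    · exact ih.symm
    · exact ih
    · exact ih
    · rcases ih with rfl | ⟨a, a', h1, h2, h3⟩
      · exact Or.inl rfl
      · exact Or.inr ⟨a', a, h2, h1, h3.symm⟩
  | trans x y z h1 h2 ih1 ih2 =>
    cases x with
    | inl u =>
      cases y with
      | inl v =>
        cases z with
        | inl w => exact ih1.trans ih2
        | inr w => exact ih1 ▸ ih2
      | inr zz =>
        obtain ⟨a, ha1, ha2⟩ := ih1
        cases z with
        | inl w =>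
          obtain ⟨a', hb1, hb2⟩ := ih2
          have : a = a' := hg (ha2.trans hb2.symm)
          exact ha1.symm.trans (this ▸ hb1)
        | inr w =>
          rcases ih2 with rfl | ⟨a1, a2, hc1, hc2, hc3⟩
          · exact ⟨a, ha1, ha2⟩
          · have : a = a1 := hg (ha2.trans hc1.symm)
            exact ⟨a2, (hc3.symm.trans (this ▸ ha1 : f a1 = u)), hc2⟩
    | inr zz =>
      cases y with
      | inl v =>
        obtain ⟨a, ha1, ha2⟩ := ih1
        cases z with
        | inl w => exact ⟨a, ih2 ▸ ha1, ha2⟩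
        | inr w =>
          obtain ⟨a', hb1, hb2⟩ := ih2
          exact Or.inr ⟨a, a', ha2, hb2, ha1.trans hb1.symm⟩
      | inr ww =>
        cases z with
        | inl w =>
          obtain ⟨a, ha1, ha2⟩ := ih2
          rcases ih1 with rfl | ⟨a1, a2, hc1, hc2, hc3⟩
          · exact ⟨a, ha1, ha2⟩
          · have : a2 = a := hg (hc2.trans ha2.symm)
            exact ⟨a1, hc3.trans ((this ▸ rfl : f a2 = f a).trans ha1), hc1⟩
        | inr w =>
          rcases ih1 with rfl | ⟨a1, a2, hc1, hc2, hc3⟩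
          · exact ih2
          · rcases ih2 with rfl | ⟨a3, a4, hd1, hd2, hd3⟩
            · exact Or.inr ⟨a1, a2, hc1, hc2, hc3⟩
            · have : a2 = a3 := hg (hc2.trans hd1.symm)
              exact Or.inr ⟨a1, a4, hc1, hd2, hc3.trans ((this ▸ rfl : f a2 = f a3).trans hd3)⟩

theorem inl_inj (hg : Function.Injective g) {u v : β}
    (h : Quot.mk (pr f g) (Sum.inl u) = Quot.mk (pr f g) (Sum.inl v)) : u = v :=
  pe_of_eqvGen f g hg (Quot.eqvGen_exact h)

end POaux

variable {L : Type} [CompleteLattice L] {A B C : LGraph L}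

/-- Vertex set of the pushout. -/
def poV (b : A ⟶ B) (c : A ⟶ C) : Type := Quot (POaux.pr (homV b) (homV c))

/-- Edge set of the pushout. -/
def poE (b : A ⟶ B) (c : A ⟶ C) : Type := Quot (POaux.pr (homE b) (homE c))

/-- The pushout graph. -/
noncomputable def poD (b : A ⟶ B) (c : A ⟶ C) : LGraph L where
  V := poV b c
  E := poE b c
  src := Quot.lift (fun x => Quot.mk _ (Sum.map B.src C.src x)) (by
    rintro _ _ ⟨a, rfl, rfl⟩
    simp only [Sum.map_inl, Sum.map_inr]
    rw [GLHom.src_comm, GLHom.src_comm]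
    exact Quot.sound ⟨A.src a, rfl, rfl⟩)
  tgt := Quot.lift (fun x => Quot.mk _ (Sum.map B.tgt C.tgt x)) (by
    rintro _ _ ⟨a, rfl, rfl⟩
    simp only [Sum.map_inl, Sum.map_inr]
    rw [GLHom.tgt_comm, GLHom.tgt_comm]
    exact Quot.sound ⟨A.tgt a, rfl, rfl⟩)
  lV := fun d => sSup {w | ∃ x, Quot.mk (POaux.pr (homV b) (homV c)) x = d ∧
    Sum.elim B.lV C.lV x = w}
  lE := fun d => sSup {w | ∃ x, Quot.mk (POaux.pr (homE b) (homE c)) x = d ∧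
    Sum.elim B.lE C.lE x = w}

theorem poD_src_inl (b : A ⟶ B) (c : A ⟶ C) (e : B.E) :
    (poD b c).src (Quot.mk (POaux.pr (homE b) (homE c)) (Sum.inl e))
      = Quot.mk (POaux.pr (homV b) (homV c)) (Sum.inl (B.src e)) := by rfl

theorem poD_src_inr (b : A ⟶ B) (c : A ⟶ C) (e : C.E) :
    (poD b c).src (Quot.mk (POaux.pr (homE b) (homE c)) (Sum.inr e))
      = Quot.mk (POaux.pr (homV b) (homV c)) (Sum.inr (C.src e)) := by rfl

theorem poD_tgt_inl (b : A ⟶ B) (c : A ⟶ C) (e : B.E) :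
    (poD b c).tgt (Quot.mk (POaux.pr (homE b) (homE c)) (Sum.inl e))
      = Quot.mk (POaux.pr (homV b) (homV c)) (Sum.inl (B.tgt e)) := by rfl

theorem poD_tgt_inr (b : A ⟶ B) (c : A ⟶ C) (e : C.E) :
    (poD b c).tgt (Quot.mk (POaux.pr (homE b) (homE c)) (Sum.inr e))
      = Quot.mk (POaux.pr (homV b) (homV c)) (Sum.inr (C.tgt e)) := by rfl

/-- The first pushout injection. -/
noncomputable def poM (b : A ⟶ B) (c : A ⟶ C) : B ⟶ poD b c where
  onV v := Quot.mk _ (Sum.inl v)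
  onE e := Quot.mk _ (Sum.inl e)
  src_comm e := rfl
  tgt_comm e := rfl
  lV_le v := le_sSup ⟨Sum.inl v, rfl, rfl⟩
  lE_le e := le_sSup ⟨Sum.inl e, rfl, rfl⟩

/-- The second pushout injection. -/
noncomputable def poN (b : A ⟶ B) (c : A ⟶ C) : C ⟶ poD b c where
  onV v := Quot.mk _ (Sum.inr v)
  onE e := Quot.mk _ (Sum.inr e)
  src_comm e := rfl
  tgt_comm e := rfl
  lV_le v := le_sSup ⟨Sum.inr v, rfl, rfl⟩
  lE_le e := le_sSup ⟨Sum.inr e, rfl, rfl⟩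

theorem po_comm (b : A ⟶ B) (c : A ⟶ C) : b ≫ poM b c = c ≫ poN b c :=
  GLHom.ext' (funext fun a => Quot.sound ⟨a, rfl, rfl⟩)
    (funext fun a => Quot.sound ⟨a, rfl, rfl⟩)

/-- Vertex part of the universal morphism out of the pushout. -/
noncomputable def poDescV (b : A ⟶ B) (c : A ⟶ C) {P : LGraph L} (h : B ⟶ P) (k : C ⟶ P)
    (w : b ≫ h = c ≫ k) : poV b c → P.V :=
  Quot.lift (Sum.elim (homV h) (homV k))
    (fun x y hxy => match x, y, hxy with
      | _, _, ⟨a, rfl, rfl⟩ => congrFun (congrArg GLHom.onV w) a)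

/-- Edge part of the universal morphism out of the pushout. -/
noncomputable def poDescE (b : A ⟶ B) (c : A ⟶ C) {P : LGraph L} (h : B ⟶ P) (k : C ⟶ P)
    (w : b ≫ h = c ≫ k) : poE b c → P.E :=
  Quot.lift (Sum.elim (homE h) (homE k))
    (fun x y hxy => match x, y, hxy with
      | _, _, ⟨a, rfl, rfl⟩ => congrFun (congrArg GLHom.onE w) a)

theorem poDescV_inl (b : A ⟶ B) (c : A ⟶ C) {P : LGraph L} (h : B ⟶ P) (k : C ⟶ P)
    (w : b ≫ h = c ≫ k) (v : B.V) :
    poDescV b c h k w (Quot.mk (POaux.pr (homV b) (homV c)) (Sum.inl v)) = GLHom.onV h v := rfl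

theorem poDescV_inr (b : A ⟶ B) (c : A ⟶ C) {P : LGraph L} (h : B ⟶ P) (k : C ⟶ P)
    (w : b ≫ h = c ≫ k) (v : C.V) :
    poDescV b c h k w (Quot.mk (POaux.pr (homV b) (homV c)) (Sum.inr v)) = GLHom.onV k v := rfl

theorem poDescE_inl (b : A ⟶ B) (c : A ⟶ C) {P : LGraph L} (h : B ⟶ P) (k : C ⟶ P)
    (w : b ≫ h = c ≫ k) (e : B.E) :
    poDescE b c h k w (Quot.mk (POaux.pr (homE b) (homE c)) (Sum.inl e)) = GLHom.onE h e := rfl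

theorem poDescE_inr (b : A ⟶ B) (c : A ⟶ C) {P : LGraph L} (h : B ⟶ P) (k : C ⟶ P)
    (w : b ≫ h = c ≫ k) (e : C.E) :
    poDescE b c h k w (Quot.mk (POaux.pr (homE b) (homE c)) (Sum.inr e)) = GLHom.onE k e := rfl

/-- The universal morphism out of the pushout. -/
noncomputable def poDesc (b : A ⟶ B) (c : A ⟶ C) {P : LGraph L} (h : B ⟶ P) (k : C ⟶ P)
    (w : b ≫ h = c ≫ k) : poD b c ⟶ P where
  onV := poDescV b c h k w
  onE := poDescE b c h k w
  src_comm := by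
    refine Quot.ind ?_
    rintro (e | e)
    · rw [poDescE_inl, poD_src_inl, poDescV_inl]
      exact GLHom.src_comm h e
    · rw [poDescE_inr, poD_src_inr, poDescV_inr]
      exact GLHom.src_comm k e
  tgt_comm := by
    refine Quot.ind ?_
    rintro (e | e)
    · rw [poDescE_inl, poD_tgt_inl, poDescV_inl]
      exact GLHom.tgt_comm h e
    · rw [poDescE_inr, poD_tgt_inr, poDescV_inr]
      exact GLHom.tgt_comm k e
  lV_le := by
    refine Quot.ind ?_
    intro x
    refine sSup_le ?_
    rintro w' ⟨x', hx', rfl⟩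
    rw [← hx']
    cases x' with
    | inl v => rw [poDescV_inl]; exact GLHom.lV_le h v
    | inr v => rw [poDescV_inr]; exact GLHom.lV_le k v
  lE_le := by
    refine Quot.ind ?_
    intro x
    refine sSup_le ?_
    rintro w' ⟨x', hx', rfl⟩
    rw [← hx']
    cases x' with
    | inl e => rw [poDescE_inl]; exact GLHom.lE_le h e
    | inr e => rw [poDescE_inr]; exact GLHom.lE_le k e

/-- One-vertex test graph. -/
def ptG : LGraph L where
  V := PUnit
  E := PEmpty
  src e := e.elim
  tgt e := e.elim
  lV _ := ⊥
  lE e := e.elim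

/-- Morphism from the one-vertex graph picking a vertex. -/
def ptPick (v : A.V) : ptG ⟶ A where
  onV _ := v
  onE e := e.elim
  src_comm e := e.elim
  tgt_comm e := e.elim
  lV_le _ := bot_le
  lE_le e := e.elim

/-- One-edge test graph. -/
def edG : LGraph L where
  V := Bool
  E := PUnit
  src _ := false
  tgt _ := true
  lV _ := ⊥
  lE _ := ⊥

/-- Morphism from the one-edge graph picking an edge. -/
def edPick (e : A.E) : edG ⟶ A where
  onV x := cond x (A.tgt e) (A.src e)
  onE _ := e
  src_comm _ := rfl
  tgt_comm _ := rfl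
  lV_le _ := bot_le
  lE_le _ := bot_le

theorem mono_onV_inj {c : A ⟶ C} (hc : Mono c) : Function.Injective (homV c) := by
  intro v v' h
  have he : ptPick v ≫ c = ptPick v' ≫ c :=
    GLHom.ext' (funext fun _ => h) (funext fun e => e.elim)
  have := hc.right_cancellation _ _ he
  exact congrFun (congrArg GLHom.onV this) PUnit.unit

theorem mono_onE_inj {c : A ⟶ C} (hc : Mono c) : Function.Injective (homE c) := by
  intro e e' h
  have hV : ∀ x : Bool, (homV c) ((edPick e).onV x) = (homV c) ((edPick e').onV x) := by
    intro x
    cases x with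
    | false =>
      show GLHom.onV c (A.src e) = GLHom.onV c (A.src e')
      rw [← GLHom.src_comm c, ← GLHom.src_comm c]
      exact congrArg C.src h
    | true =>
      show GLHom.onV c (A.tgt e) = GLHom.onV c (A.tgt e')
      rw [← GLHom.tgt_comm c, ← GLHom.tgt_comm c]
      exact congrArg C.tgt h
  have he : edPick e ≫ c = edPick e' ≫ c :=
    GLHom.ext' (funext hV) (funext fun _ => h)
  have := hc.right_cancellation _ _ he
  exact congrFun (congrArg GLHom.onE this) PUnit.unit

theorem po_mono (b : A ⟶ B) (c : A ⟶ C) (hc : Mono c) : Mono (poM b c) := by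
  constructor
  intro T f g hfg
  refine GLHom.ext' (funext fun v => ?_) (funext fun e => ?_)
  · exact POaux.inl_inj (homV b) (homV c) (mono_onV_inj hc)
      (congrFun (congrArg GLHom.onV hfg) v)
  · exact POaux.inl_inj (homE b) (homE c) (mono_onE_inj hc)
      (congrFun (congrArg GLHom.onE hfg) e)

end PushoutConstruction

/-- In the category `Graph^(L,≤)` of labeled graphs over a complete
lattice `(L,≤)`, monomorphisms are stable under pushout: for every span
`B ←b A →c C` in which `c` is a monomorphism, there exists a pushout
`B →m D ←n C` of the span, and `m` is a monomorphism. -/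
theorem statement_0 {L : Type} [CompleteLattice L] {A B C : LGraph L}
    (b : A ⟶ B) (c : A ⟶ C) (hc : Mono c) :
    ∃ (D : LGraph L) (m : B ⟶ D) (n : C ⟶ D), IsPushout b c m n ∧ Mono m := by
  refine ⟨poD b c, poM b c, poN b c, ?_, po_mono b c hc⟩
  have w : b ≫ poM b c = c ≫ poN b c := po_comm b c
  refine IsPushout.of_isColimit' ⟨w⟩ ?_
  refine Limits.PushoutCocone.isColimitAux' _ (fun s => ?_)
  refine ⟨poDesc b c s.inl s.inr s.condition, ?_, ?_, ?_⟩
  · exact GLHom.ext' (funext fun v => poDescV_inl b c s.inl s.inr s.condition v)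
      (funext fun e => poDescE_inl b c s.inl s.inr s.condition e)
  · exact GLHom.ext' (funext fun v => poDescV_inr b c s.inl s.inr s.condition v)
      (funext fun e => poDescE_inr b c s.inl s.inr s.condition e)
  · intro m h1 h2
    refine GLHom.ext' (funext ?_) (funext ?_)
    · refine Quot.ind ?_
      rintro (v | v)
      · exact (congrFun (congrArg GLHom.onV h1) v).trans
          (poDescV_inl b c s.inl s.inr s.condition v).symm
      · exact (congrFun (congrArg GLHom.onV h2) v).trans
          (poDescV_inr b c s.inl s.inr s.condition v).symm
    · refine Quot.ind ?_
      rintro (e | e)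
      · exact (congrFun (congrArg GLHom.onE h1) e).trans
          (poDescE_inl b c s.inl s.inr s.condition e).symm
      · exact (congrFun (congrArg GLHom.onE h2) e).trans
          (poDescE_inr b c s.inl s.inr s.condition e).symm
end
end

section
/- If a zone Z of a finite Σ°-labeled graph contains no directed cycle among its included edges, then Z is a directed tree: Z has a unique root (a vertex of Z with no parent inside Z), and for every vertex v of Z there is a unique directed path from the root to v using only edges included in Z. -/
open CategoryTheory
open Classical

noncomputable section

section Stmt13Aux

variable {S : Type} {ar : S → ℕ} {G : LGraph (FlatL S)}

theorem zedge_tgt_unique {e e' : G.E} (he : ZoneEdge G ar e)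
    (h : G.tgt e' = G.tgt e) : e = e' :=
  (he.2 e rfl) e e' rfl h

theorem zpath_append {u : G.V} {es : List G.E} {w : G.V} (h : IsZPath G ar u es w)
    {e : G.E} (he : ZoneEdge G ar e) (hs : G.src e = w) :
    IsZPath G ar u (es ++ [e]) (G.tgt e) := by
  induction es generalizing u with
  | nil =>
    have hu : u = w := h
    exact ⟨he, hs.trans hu.symm, rfl⟩
  | cons f fs ih =>
    obtain ⟨h1, h2, h3⟩ := h
    exact ⟨h1, h2, ih h3⟩

theorem zpath_snoc {u : G.V} {e : G.E} {es : List G.E} {w : G.V}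
    (h : IsZPath G ar u (e :: es) w) :
    ∃ es₀ f, e :: es = es₀ ++ [f] ∧ ZoneEdge G ar f ∧ G.tgt f = w ∧
      IsZPath G ar u es₀ (G.src f) := by
  induction es generalizing u e with
  | nil =>
    obtain ⟨h1, h2, h3⟩ := h
    exact ⟨[], e, rfl, h1, h3, h2.symm⟩
  | cons f fs ih =>
    obtain ⟨h1, h2, h3⟩ := h
    obtain ⟨es₀, g, heq, hg, htg, hp⟩ := ih h3
    exact ⟨e :: es₀, g, by rw [heq]; rfl, hg, htg, ⟨h1, h2, hp⟩⟩

end Stmt13Aux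

/-- If a zone `Z` (here: the zone of a vertex `v₀`) of a finite
`Σ°`-labeled graph contains no directed cycle among its included edges, then
`Z` is a directed tree: it has a unique root, and every vertex of `Z` is
reached from the root by a unique directed path of edges included in `Z`. -/
theorem statement_13 {S : Type} (ar : S → ℕ) (G : LGraph (FlatL S))
    (hfin : FiniteG G) (v₀ : G.V)
    (hacyc : ¬ ∃ u, SameZone G ar u v₀ ∧ Relation.TransGen (ZStep G ar) u u) :
    ∃ r : G.V, (SameZone G ar r v₀ ∧ IsZoneRoot G ar r) ∧
      (∀ r', SameZone G ar r' v₀ → IsZoneRoot G ar r' → r' = r) ∧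
      (∀ v, SameZone G ar v v₀ → ∃! es : List G.E, IsZPath G ar r es v) := by
  have _inst : Finite G.V := hfin.1
  -- the restricted step relation on the zone of v₀
  let Srel : {u : G.V // SameZone G ar u v₀} → {u : G.V // SameZone G ar u v₀} → Prop :=
    fun a b => ZStep G ar a.1 b.1
  have hirr : ∀ a, ¬ Relation.TransGen Srel a a := by
    intro a h
    exact hacyc ⟨a.1, a.2, Relation.TransGen.lift (r := Srel) (p := ZStep G ar) Subtype.val (fun _ _ h => h) _ _ h⟩
  have hwf : WellFounded Srel := by
    have h1 : IsIrrefl _ (Relation.TransGen Srel) := ⟨hirr⟩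
    have h2 : IsTrans _ (Relation.TransGen Srel) := ⟨fun _ _ _ => Relation.TransGen.trans⟩
    exact Subrelation.wf (fun h => Relation.TransGen.single h)
      (Finite.wellFounded_of_trans_of_irrefl _)
  -- every zone vertex is reached from some root of the zone
  have claimA : ∀ a : {u : G.V // SameZone G ar u v₀},
      ∃ r, SameZone G ar r v₀ ∧ IsZoneRoot G ar r ∧ ∃ es, IsZPath G ar r es a.1 := by
    intro a
    refine hwf.induction
      (C := fun a => ∃ r, SameZone G ar r v₀ ∧ IsZoneRoot G ar r ∧ ∃ es, IsZPath G ar r es a.1)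
      a ?_
    intro b ih
    by_cases hroot : IsZoneRoot G ar b.1
    · exact ⟨b.1, b.2, hroot, [], rfl⟩
    · obtain ⟨e, he, hte⟩ := not_not.mp hroot
      have hstep : ZStep G ar (G.src e) b.1 := ⟨e, he, rfl, hte⟩
      have hu : SameZone G ar (G.src e) v₀ :=
        Relation.EqvGen.trans _ _ _ (Relation.EqvGen.rel _ _ hstep) b.2
      obtain ⟨r, hrZ, hrroot, es, hp⟩ := ih ⟨G.src e, hu⟩ hstep
      exact ⟨r, hrZ, hrroot, es ++ [e], hte ▸ zpath_append hp he rfl⟩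
  -- uniqueness of the root-path pair for each zone vertex
  have claimU : ∀ a : {u : G.V // SameZone G ar u v₀}, ∀ (r r' : G.V) (es es' : List G.E),
      IsZoneRoot G ar r → IsZoneRoot G ar r' →
      IsZPath G ar r es a.1 → IsZPath G ar r' es' a.1 → r = r' ∧ es = es' := by
    intro a
    refine hwf.induction
      (C := fun a => ∀ (r r' : G.V) (es es' : List G.E),
        IsZoneRoot G ar r → IsZoneRoot G ar r' →
        IsZPath G ar r es a.1 → IsZPath G ar r' es' a.1 → r = r' ∧ es = es') a ?_
    intro b ih r r' es es' hr hr' hp hp'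
    match es, es' with
    | [], [] =>
      have h1 : r = b.1 := hp
      have h2 : r' = b.1 := hp'
      exact ⟨h1.trans h2.symm, rfl⟩
    | [], e :: t =>
      obtain ⟨es₀, f, _, hf, htf, _⟩ := zpath_snoc hp'
      have h1 : r = b.1 := hp
      exact absurd ⟨f, hf, htf⟩ (h1 ▸ hr)
    | e :: t, [] =>
      obtain ⟨es₀, f, _, hf, htf, _⟩ := zpath_snoc hp
      have h2 : r' = b.1 := hp'
      exact absurd ⟨f, hf, htf⟩ (h2 ▸ hr')
    | e :: t, e' :: t' =>
      obtain ⟨es₀, f, heq, hf, htf, hq⟩ := zpath_snoc hp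
      obtain ⟨es₀', f', heq', hf', htf', hq'⟩ := zpath_snoc hp'
      have hff : f = f' := zedge_tgt_unique hf (htf'.trans htf.symm)
      subst hff
      have hstep : ZStep G ar (G.src f) b.1 := ⟨f, hf, rfl, htf⟩
      have hu : SameZone G ar (G.src f) v₀ :=
        Relation.EqvGen.trans _ _ _ (Relation.EqvGen.rel _ _ hstep) b.2
      obtain ⟨hrr, hes⟩ := ih ⟨G.src f, hu⟩ hstep r r' es₀ es₀' hr hr' hq hq'
      exact ⟨hrr, by rw [heq, heq', hes]⟩
  -- vertices in the same zone are reached from the same root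
  have sameRoot : ∀ u w, SameZone G ar u w →
      SameZone G ar u v₀ → SameZone G ar w v₀ →
      ∀ (r : G.V) (es : List G.E) (r' : G.V) (es' : List G.E),
        IsZoneRoot G ar r → IsZoneRoot G ar r' →
        IsZPath G ar r es u → IsZPath G ar r' es' w → r = r' := by
    intro u w h
    induction h with
    | rel u w hstep =>
      intro _ hw r es r' es' hr hr' hp hp'
      obtain ⟨e, he, hse, hte⟩ := hstep
      have hext : IsZPath G ar r (es ++ [e]) w := hte ▸ zpath_append hp he hse
      exact (claimU ⟨w, hw⟩ r r' _ es' hr hr' hext hp').1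
    | refl u =>
      intro hu _ r es r' es' hr hr' hp hp'
      exact (claimU ⟨u, hu⟩ r r' es es' hr hr' hp hp').1
    | symm u w _ ih =>
      intro hu hw r es r' es' hr hr' hp hp'
      exact (ih hw hu r' es' r es hr' hr hp' hp).symm
    | trans u x w h1 _ ih1 ih2 =>
      intro hu hw r es r' es' hr hr' hp hp'
      have hx : SameZone G ar x v₀ :=
        Relation.EqvGen.trans _ _ _ (Relation.EqvGen.symm _ _ h1) hu
      obtain ⟨rx, _, hrxroot, esx, hpx⟩ := claimA ⟨x, hx⟩
      exact (ih1 hu hx r es rx esx hr hrxroot hp hpx).trans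
        (ih2 hx hw rx esx r' es' hrxroot hr' hpx hp')
  obtain ⟨r, hrZ, hrroot, es₀, hp₀⟩ := claimA ⟨v₀, Relation.EqvGen.refl v₀⟩
  refine ⟨r, ⟨hrZ, hrroot⟩, ?_, ?_⟩
  · intro r' hr'Z hr'root
    exact sameRoot r' v₀ hr'Z hr'Z (Relation.EqvGen.refl v₀) r' [] r es₀ hr'root hrroot rfl hp₀
  · intro v hvZ
    obtain ⟨rv, _, hrvroot, esv, hpv⟩ := claimA ⟨v, hvZ⟩
    have hrv : rv = r :=
      sameRoot v v₀ hvZ hvZ (Relation.EqvGen.refl v₀) rv esv r es₀ hrvroot hrroot hpv hp₀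
    refine ⟨esv, hrv ▸ hpv, ?_⟩
    intro es' hes'
    exact (claimU ⟨v, hvZ⟩ r r es' esv hrroot hrroot hes' (hrv ▸ hpv)).2
end
end
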